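/- Let P be a reducible VASS with variables x_1,…,x_n whose control flow graph is a single strongly connected component with a unique entry location l_0 that is also its unique exit point. Let π be a loop-path of P with contracted update c_π and suppose there is a variable index j and an integer k > 0 such that c_π(j) = −k and c_{π'}(j) ≤ 0 for every loop-path π' of P. Then for every finite trace of P starting at (l_0, σ_0) and ending at location l_0, the underlying path contains at most σ_0(x_j)/k instances of π. -/

import Mathlib

open scoped BigOperators

/-- Update vectors in `ℤⁿ`. -/
abbrev Upd (n : ℕ) := Fin n → ℤ

/-- Valuations of the variables (values are natural numbers). -/
abbrev Valu (n : ℕ) := Fin n → ℕ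

/-- An edge (transition) of a VASS: source location, update vector, target location. -/
abbrev VEdge (n : ℕ) (L : Type*) := L × Upd n × L

/-- A lossy vector addition system with states over `n` variables and locations `L`. -/
structure VASS (n : ℕ) (L : Type*) where
  E : Set (VEdge n L)

namespace VASS

variable {n : ℕ} {L : Type*}

/-- `FPath P a p b`: the list of edges `p` is a finite path of `P` from `a` to `b`. -/
inductive FPath (P : VASS n L) : L → List (VEdge n L) → L → Prop
  | nil (a : L) : FPath P a [] a
  | cons {a b c : L} {d : Upd n} {p : List (VEdge n L)} :
      (a, d, b) ∈ P.E → FPath P b p c → FPath P a ((a, d, b) :: p) c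

/-- `x` occurs among the locations of the path `p` starting at location `a`. -/
def Visits (a : L) (p : List (VEdge n L)) (x : L) : Prop :=
  x = a ∨ ∃ e ∈ p, e.2.2 = x

/-- `a` dominates `b` (w.r.t. the entry location):
every path from the entry to `b` includes `a`. -/
def Dominates (P : VASS n L) (entry a b : L) : Prop :=
  ∀ p : List (VEdge n L), P.FPath entry p b → Visits entry p a

/-- An edge `l₁ → l₂` is a back edge if `l₂` dominates `l₁`. -/
def BackEdge (P : VASS n L) (entry : L) (e : VEdge n L) : Prop :=
  e ∈ P.E ∧ P.Dominates entry e.2.2 e.1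

/-- All locations are reachable from the entry location. -/
def EntryReach (P : VASS n L) (entry : L) : Prop :=
  ∀ x : L, ∃ p, P.FPath entry p x

/-- `P` is reducible: the graph becomes acyclic after removing all back edges. -/
def Reducible (P : VASS n L) (entry : L) : Prop :=
  ∀ (a : L) (p : List (VEdge n L)), (∀ e ∈ p, ¬ P.BackEdge entry e) → P.FPath a p a → p = []

/-- `h` is a loop header: the target of some back edge. -/
def LoopHeader (P : VASS n L) (entry h : L) : Prop :=
  ∃ e, P.BackEdge entry e ∧ e.2.2 = h

/-- The natural loop of the loop header `h`: all locations `x` dominated by `h` such that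
there is a back edge `m → h` and a path from `x` to `m` that does not contain `h`. -/
def NaturalLoop (P : VASS n L) (entry h : L) : Set L :=
  {x | P.Dominates entry h x ∧ ∃ e, P.BackEdge entry e ∧ e.2.2 = h ∧
    ∃ p, P.FPath x p e.1 ∧ ∀ e' ∈ p, e'.2.2 ≠ h}

/-- `p` is a loop-path at loop header `l`: a simple cyclic path starting and ending at `l`
that visits only locations inside the natural loop of `l`. -/
def LoopPath (P : VASS n L) (entry l : L) (p : List (VEdge n L)) : Prop :=
  P.LoopHeader entry l ∧ P.FPath l p l ∧ p ≠ [] ∧ (p.map Prod.fst).Nodup ∧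
    ∀ x, Visits l p x → x ∈ P.NaturalLoop entry l

/-- The contracted update of a path: the sum of the update vectors along the path. -/
def contractUpd (p : List (VEdge n L)) : Upd n :=
  (p.map (fun e => e.2.1)).sum

/-- Control flow abstraction: the transition system containing the contracted update
of every loop-path of `P`. -/
def CFA (P : VASS n L) (entry : L) : Set (Upd n) :=
  {c | ∃ l p, P.LoopPath entry l p ∧ c = contractUpd p}

/-- `InstanceAux P h π ν D`: `ν` is an instance of the loop-path `π` (whose header is `h`),
interleaving the designated transitions of `π` with cyclic filler paths avoiding `h`;
`D` is the set of positions in `ν` of the designated transitions of `π`. -/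
inductive InstanceAux (P : VASS n L) (h : L) :
    List (VEdge n L) → List (VEdge n L) → Set ℕ → Prop
  | single (e : VEdge n L) : InstanceAux P h [e] [e] {0}
  | cons (e : VEdge n L) (q rest ν : List (VEdge n L)) (D : Set ℕ) :
      P.FPath e.2.2 q e.2.2 → e.2.2 ≠ h → (∀ e' ∈ q, e'.2.2 ≠ h) →
      InstanceAux P h rest ν D →
      InstanceAux P h (e :: rest) (e :: (q ++ ν)) (insert 0 ((fun m => m + q.length + 1) '' D))

/-- `ν` is an instance of the loop-path `π`, with `D` the positions of the
designated transitions of `π` inside `ν`. -/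
def IsInstance (P : VASS n L) (π ν : List (VEdge n L)) (D : Set ℕ) : Prop :=
  ∃ e rest, π = e :: rest ∧ P.InstanceAux e.1 π ν D

/-- The path `p` contains an instance of `π` starting at position `i` and of length `k`. -/
def InstanceAt (P : VASS n L) (π p : List (VEdge n L)) (i k : ℕ) : Prop :=
  i + k ≤ p.length ∧ 1 ≤ k ∧ ∃ D, P.IsInstance π ((p.drop i).take k) D

/-- The number of instances of the loop-path `π` contained in the path `p`. -/
noncomputable def numInstances (P : VASS n L) (π p : List (VEdge n L)) : ℕ :=
  {q : ℕ × ℕ | P.InstanceAt π p q.1 q.2}.ncard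

/-- The transition occurrence at position `t` of the path `p` belongs to the instance of
the loop-path `π` contained in `p` at position `i` with length `k` (i.e. `t` is one of the
designated transitions of that instance). -/
def BelongsAt (P : VASS n L) (π p : List (VEdge n L)) (i k t : ℕ) : Prop :=
  i + k ≤ p.length ∧ 1 ≤ k ∧ i ≤ t ∧ t < i + k ∧
    ∃ D, P.IsInstance π ((p.drop i).take k) D ∧ (t - i) ∈ D

/-- An infinite trace of the VASS `P`. -/
def InfTrace (P : VASS n L) (locs : ℕ → L) (upds : ℕ → Upd n) (vals : ℕ → Valu n) : Prop :=
  ∀ i, (locs i, upds i, locs (i+1)) ∈ P.E ∧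
    ∀ j, (vals (i+1) j : ℤ) ≤ (vals i j : ℤ) + upds i j

/-- `P` is terminating: it has no infinite trace. -/
def Terminating (P : VASS n L) : Prop :=
  ¬ ∃ locs upds vals, P.InfTrace locs upds vals

/-- The valuations `vals` form a trace of `P` along the finite path `p`. -/
def FinTraceVals (P : VASS n L) (p : List (VEdge n L)) (vals : ℕ → Valu n) : Prop :=
  ∀ (i : ℕ) (hi : i < p.length), ∀ j,
    (vals (i+1) j : ℤ) ≤ (vals i j : ℤ) + (p.get ⟨i, hi⟩).2.1 j

end VASS

/-- An enumeration `τ₁,…,τ_k` of the transition system `T` together with variables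
`y₁,…,y_k` satisfies the ranking condition of the `Ranking` algorithm:
`τᵢ ⊨ yᵢ' < yᵢ`, and `τⱼ ⊨ yᵢ' ≤ yᵢ` for all `j ≥ i`. -/
def RankingCondition {n : ℕ} (T : Set (Upd n)) {k : ℕ}
    (τ : Fin k → Upd n) (y : Fin k → Fin n) : Prop :=
  Function.Injective τ ∧ Set.range τ = T ∧
    (∀ i, τ i (y i) < 0) ∧ ∀ i j : Fin k, i ≤ j → τ j (y i) ≤ 0

/-- An infinite lossy execution of the transition system `T`. -/
def LossyExec {n : ℕ} (T : Set (Upd n)) (v : ℕ → Valu n) (d : ℕ → Upd n) : Prop :=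
  ∀ m, d m ∈ T ∧ ∀ j, (v (m+1) j : ℤ) ≤ (v m j : ℤ) + d m j

/-- A finite lossy execution `v 0, …, v N` of the transition system `T`. -/
def FinLossyExec {n : ℕ} (T : Set (Upd n)) (N : ℕ) (v : ℕ → Valu n) (d : ℕ → Upd n) : Prop :=
  ∀ m < N, d m ∈ T ∧ ∀ j, (v (m+1) j : ℤ) ≤ (v m j : ℤ) + d m j


namespace VASS

variable {n : ℕ} {L : Type*} {P : VASS n L}

lemma FPath.append {a b c : L} {p q : List (VEdge n L)}
    (h1 : P.FPath a p b) (h2 : P.FPath b q c) : P.FPath a (p ++ q) c := by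
  induction h1 with
  | nil => simpa
  | cons he _ ih => exact FPath.cons he (ih h2)

lemma FPath.split {a c : L} {p q : List (VEdge n L)}
    (h : P.FPath a (p ++ q) c) : ∃ b, P.FPath a p b ∧ P.FPath b q c := by
  induction p generalizing a with
  | nil => exact ⟨a, FPath.nil a, h⟩
  | cons e p ih =>
    cases h with
    | cons he h' =>
      obtain ⟨b, h1, h2⟩ := ih h'
      exact ⟨b, FPath.cons he h1, h2⟩

lemma FPath.head_src {a b : L} {e : VEdge n L} {p : List (VEdge n L)}
    (h : P.FPath a (e :: p) b) : e.1 = a ∧ e ∈ P.E ∧ P.FPath e.2.2 p b := by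
  cases h with
  | cons he h' => exact ⟨rfl, he, h'⟩

lemma FPath.last_tgt {a b : L} {p : List (VEdge n L)}
    (h : P.FPath a p b) (hne : p ≠ []) : (p.getLast hne).2.2 = b := by
  induction h with
  | nil => simp at hne
  | @cons a' b' c' d' p' he h' ih =>
    rcases eq_or_ne p' [] with rfl | hp
    · cases h'; simp
    · rw [List.getLast_cons hp]; exact ih hp

lemma FPath.visits_end {a b : L} {p : List (VEdge n L)}
    (h : P.FPath a p b) : Visits a p b := by
  rcases eq_or_ne p [] with rfl | hp
  · cases h; exact Or.inl rfl
  · exact Or.inr ⟨p.getLast hp, List.getLast_mem hp, h.last_tgt hp⟩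

lemma contractUpd_apply (p : List (VEdge n L)) (j : Fin n) :
    contractUpd p j = (p.map (fun e => e.2.1 j)).sum := by
  induction p with
  | nil => rfl
  | cons e p ih => simp [contractUpd, List.sum_cons] at ih ⊢; simp [ih]

lemma contractUpd_append (p q : List (VEdge n L)) (j : Fin n) :
    contractUpd (p ++ q) j = contractUpd p j + contractUpd q j := by
  simp [contractUpd_apply]

lemma FPath.drop {a b : L} {p : List (VEdge n L)} (h : P.FPath a p b)
    (i : ℕ) (hi : i < p.length) : P.FPath (p[i].1) (p.drop i) b := by
  obtain ⟨c, h1, h2⟩ := FPath.split (p := p.take i) (q := p.drop i)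
    (by rw [List.take_append_drop]; exact h)
  rw [List.drop_eq_getElem_cons hi] at h2 ⊢
  obtain ⟨rfl, _, _⟩ := h2.head_src
  exact h2

lemma FPath.src_succ {a b : L} {p : List (VEdge n L)} (h : P.FPath a p b)
    (i : ℕ) (hi : i + 1 < p.length) : p[i+1].1 = p[i].2.2 := by
  have h1 := h.drop i (by omega)
  rw [List.drop_eq_getElem_cons (by omega)] at h1
  obtain ⟨-, -, h2⟩ := h1.head_src
  rw [List.drop_eq_getElem_cons hi] at h2
  exact h2.head_src.1

lemma FPath.take_drop {a b : L} {p : List (VEdge n L)} (h : P.FPath a p b)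
    (i : ℕ) (hi : i < p.length) :
    P.FPath a (p.take i) (p[i].1) ∧ P.FPath (p[i].1) (p.drop i) b := by
  obtain ⟨c, h1, h2⟩ := FPath.split (p := p.take i) (q := p.drop i)
    (by rw [List.take_append_drop]; exact h)
  rw [List.drop_eq_getElem_cons hi] at h2
  obtain ⟨rfl, _, _⟩ := h2.head_src
  exact ⟨h1, h.drop i hi⟩

lemma FPath.single {e : VEdge n L} (he : e ∈ P.E) : P.FPath e.1 [e] e.2.2 := by
  have : P.FPath e.1 [(e.1, e.2.1, e.2.2)] e.2.2 := FPath.cons he (FPath.nil _)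
  simpa using this

/-- Every cycle in a reducible VASS (all of whose loop-paths are nonincreasing in `j`)
has nonpositive contracted update in `j`. -/
lemma cycle_nonpos {l0 : L} (hred : P.Reducible l0) {j : Fin n}
    (hmono : ∀ (π' : List (VEdge n L)) (l' : L), P.LoopPath l0 l' π' →
      contractUpd π' j ≤ 0) :
    ∀ (N : ℕ) (p : List (VEdge n L)) (b : L), p.length ≤ N → P.FPath b p b →
      contractUpd p j ≤ 0 := by
  intro N
  induction N with
  | zero =>
    intro p b hlen hp
    rw [Nat.le_zero, List.length_eq_zero_iff] at hlen
    subst hlen; simp [contractUpd]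
  | succ N ih =>
    intro p b hlen hp
    by_cases hbe : ∀ e ∈ p, ¬ P.BackEdge l0 e
    · rw [hred b p hbe hp]; simp [contractUpd]
    push_neg at hbe
    obtain ⟨e, hep, hbe⟩ := hbe
    obtain ⟨p1, p2, rfl⟩ := List.append_of_mem hep
    obtain ⟨m', hp1, hp2⟩ := hp.split
    obtain ⟨hm', heE, hp2'⟩ := hp2.head_src
    set h := e.2.2 with hh
    set m := e.1 with hm
    -- the rotated cycle c' = p2 ++ p1 ++ [e] from h to h
    have hr : P.FPath h (p2 ++ p1) m := by
      subst hm'; exact hp2'.append hp1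
    have hsingle : P.FPath m [e] h := FPath.single heE
    set r := p2 ++ p1 with hrdef
    have hc' : P.FPath h (r ++ [e]) h := hr.append hsingle
    have hlenr : r.length + 1 = p1.length + (1 + p2.length) := by
      simp [hrdef]; omega
    have hlenp : (p1 ++ e :: p2).length = r.length + 1 := by
      simp [hrdef]; omega
    have hsum : contractUpd (p1 ++ e :: p2) j = contractUpd (r ++ [e]) j := by
      simp [contractUpd_apply, hrdef]; ring
    rw [hsum]
    by_cases hcase1 : ∃ e' ∈ r, e'.2.2 = h
    · -- split r at an edge returning to h
      obtain ⟨e', he'r, he'h⟩ := hcase1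
      obtain ⟨u, w, hsplit⟩ := List.append_of_mem he'r
      rw [hsplit] at hr
      rw [hsplit]
      obtain ⟨x, hu, hw⟩ := hr.split
      obtain ⟨hx, he'E, hw'⟩ := hw.head_src
      have hl2 := congrArg List.length hsplit
      rw [hrdef] at hl2; simp at hl2
      have hcyc1 : P.FPath h (u ++ [e']) h := by
        apply hu.append
        have := FPath.single (P := P) he'E
        rw [hx, he'h] at this; exact this
      have hcyc2 : P.FPath h (w ++ [e]) h := by
        rw [he'h] at hw'; exact hw'.append hsingle
      have h1 := ih (u ++ [e']) h (by simp at hlen hlenp ⊢; omega) hcyc1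
      have h2 := ih (w ++ [e]) h (by simp at hlen hlenp ⊢; omega) hcyc2
      have : contractUpd ((u ++ e' :: w) ++ [e]) j
          = contractUpd (u ++ [e']) j + contractUpd (w ++ [e]) j := by
        simp [contractUpd_apply]; ring
      rw [this]; omega
    -- no edge of r returns to h
    have hrt : ∀ e' ∈ r, e'.2.2 ≠ h := by
      push_neg at hcase1; exact hcase1
    by_cases hnodup : ((r ++ [e]).map Prod.fst).Nodup
    · -- r ++ [e] is a loop-path at h
      have hdom : ∀ (x : L) (w : List (VEdge n L)), P.FPath x w m →
          (∀ e' ∈ w, e'.2.2 ≠ h) → P.Dominates l0 h x := by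
        intro x w hw havoid q hq
        by_contra hnv
        rw [Visits] at hnv; push_neg at hnv
        obtain ⟨hne, hnt⟩ := hnv
        have hvm := hbe.2 (q ++ w) (hq.append hw)
        rcases hvm with h1 | ⟨e', he', ht⟩
        · exact hne h1
        · rcases List.mem_append.mp he' with h2 | h2
          · exact hnt e' h2 ht
          · exact havoid e' h2 ht
      have hnat : ∀ (x : L) (w : List (VEdge n L)), P.FPath x w m →
          (∀ e' ∈ w, e'.2.2 ≠ h) → x ∈ P.NaturalLoop l0 h := by
        intro x w hw havoid
        exact ⟨hdom x w hw havoid, e, hbe, hh.symm, w, hw, havoid⟩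
      have hlp : P.LoopPath l0 h (r ++ [e]) := by
        refine ⟨⟨e, hbe, hh.symm⟩, hc', by simp, hnodup, ?_⟩
        intro x hx
        rcases hx with rfl | ⟨e'', he'', htx⟩
        · exact hnat h r hr hrt
        · rcases List.mem_append.mp he'' with h2 | h2
          · obtain ⟨u, w, hsplit2⟩ := List.append_of_mem h2
            rw [hsplit2] at hr
            obtain ⟨y, hu, hw⟩ := hr.split
            obtain ⟨hy, he''E, hw'⟩ := hw.head_src
            rw [htx] at hw'
            refine hnat x w hw' ?_
            intro e3 he3
            exact hrt e3 (by rw [hsplit2]; exact List.mem_append_right _ (List.mem_cons_of_mem _ he3))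
          · simp at h2
            subst h2
            rw [← htx, ← hh]
            exact hnat h r hr hrt
      exact hmono _ h hlp
    · -- duplicate source: split out a proper subcycle
      rw [List.nodup_iff_injective_get] at hnodup
      rw [Function.Injective] at hnodup; push_neg at hnodup
      obtain ⟨i1, i2, hgeq, hine⟩ := hnodup
      wlog hlt : (i1 : ℕ) < (i2 : ℕ) generalizing i1 i2
      · have hne' : (i1 : ℕ) ≠ (i2 : ℕ) := fun hv => hine (Fin.ext hv)
        exact this i2 i1 hgeq.symm hine.symm (by omega)
      have hclen : (r ++ [e]).length ≤ N + 1 := by simp at hlen hlenp ⊢; omega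
      set i := (i1 : ℕ) with hidef
      set jj := (i2 : ℕ) with hjjdef
      have hj : jj < (r ++ [e]).length := by
        have := i2.isLt; simpa using this
      have hi : i < (r ++ [e]).length := lt_trans hlt hj
      have hxeq : ((r ++ [e])[i]'hi).1 = ((r ++ [e])[jj]'hj).1 := by
        have := hgeq
        simp only [List.get_eq_getElem, List.getElem_map] at this
        exact this
      obtain ⟨hA, hdropi⟩ := hc'.take_drop i hi
      obtain ⟨hs2, hs3⟩ := hdropi.take_drop (jj - i) (by rw [List.length_drop]; omega)
      have hgd : (((r ++ [e]).drop i)[jj - i]'(by rw [List.length_drop]; omega)) = ((r ++ [e])[jj]'hj) := by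
        rw [List.getElem_drop]; congr 1; omega
      rw [hgd, ← hxeq] at hs2 hs3
      have hdd : ((r ++ [e]).drop i).drop (jj - i) = (r ++ [e]).drop jj := by
        rw [List.drop_drop]; congr 1; omega
      rw [hdd] at hs3
      have hcyc1 := ih (((r ++ [e]).drop i).take (jj - i)) _
        (by rw [List.length_take, List.length_drop]; omega) hs2
      have hcyc2 := ih ((r ++ [e]).take i ++ (r ++ [e]).drop jj) h
        (by rw [List.length_append, List.length_take, List.length_drop]; omega)
        (hA.append hs3)
      rw [contractUpd_append] at hcyc2
      have hsplitsum : contractUpd (r ++ [e]) j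
          = contractUpd (((r ++ [e]).drop i).take (jj - i)) j
            + (contractUpd ((r ++ [e]).take i) j + contractUpd ((r ++ [e]).drop jj) j) := by
        conv_lhs => rw [← List.take_append_drop i (r ++ [e])]
        rw [contractUpd_append]
        conv_lhs => rw [← List.take_append_drop (jj - i) ((r ++ [e]).drop i)]
        rw [contractUpd_append, hdd]; ring
      rw [hsplitsum]
      linarith

lemma InstanceAux.ne_nil {h : L} {π ν : List (VEdge n L)} {D : Set ℕ}
    (hI : P.InstanceAux h π ν D) : π ≠ [] ∧ ν ≠ [] := by
  cases hI <;> simp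

lemma InstanceAux.head {h : L} {e : VEdge n L} {rest ν : List (VEdge n L)} {D : Set ℕ}
    (hI : P.InstanceAux h (e :: rest) ν D) : ∃ ν', ν = e :: ν' := by
  cases hI with
  | single => exact ⟨[], rfl⟩
  | cons => exact ⟨_, rfl⟩

lemma InstanceAux.getLast? {h : L} {π ν : List (VEdge n L)} {D : Set ℕ}
    (hI : P.InstanceAux h π ν D) : ν.getLast? = π.getLast? := by
  induction hI with
  | single e => rfl
  | cons e q rest ν D hq hne hqt hI ih =>
    have hν : ν ≠ [] := hI.ne_nil.2
    have hrest : rest ≠ [] := hI.ne_nil.1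
    have h1 : (e :: (q ++ ν)).getLast? = ν.getLast? := by
      rw [show e :: (q ++ ν) = (e :: q) ++ ν from rfl]
      exact List.getLast?_append_of_ne_nil _ hν
    have h2 : (e :: rest).getLast? = rest.getLast? := by
      rw [show e :: rest = [e] ++ rest from rfl]
      exact List.getLast?_append_of_ne_nil _ hrest
    rw [h1, h2, ih]

lemma InstanceAux.interior {h : L} {π ν : List (VEdge n L)} {D : Set ℕ}
    (hI : P.InstanceAux h π ν D) (hπ : ∀ e' ∈ π.dropLast, e'.2.2 ≠ h) :
    ∀ e' ∈ ν.dropLast, e'.2.2 ≠ h := by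
  induction hI with
  | single e => simp
  | cons e q rest ν D hq hne hqt hI ih =>
    have hν : ν ≠ [] := hI.ne_nil.2
    have hrest : rest ≠ [] := hI.ne_nil.1
    intro e' he'
    rw [List.dropLast_cons_of_ne_nil (by simp [hν]), List.dropLast_append_of_ne_nil hν,
      List.mem_cons, List.mem_append] at he'
    rcases he' with rfl | he' | he'
    · apply hπ
      rw [List.dropLast_cons_of_ne_nil hrest]
      exact List.mem_cons_self
    · exact hqt e' he'
    · apply ih ?_ e' he'
      intro e'' he''
      apply hπ
      rw [List.dropLast_cons_of_ne_nil hrest]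
      exact List.mem_cons_of_mem _ he''

lemma InstanceAux.sum_le {h : L} {π ν : List (VEdge n L)} {D : Set ℕ} {j : Fin n}
    (hI : P.InstanceAux h π ν D)
    (hcyc : ∀ (q : List (VEdge n L)) (a : L), P.FPath a q a → contractUpd q j ≤ 0) :
    contractUpd ν j ≤ contractUpd π j := by
  induction hI with
  | single e => exact le_refl _
  | cons e q rest ν D hq hne hqt hI ih =>
    have hq0 := hcyc q _ hq
    have h1 : contractUpd (e :: (q ++ ν)) j = e.2.1 j + (contractUpd q j + contractUpd ν j) := by
      simp [contractUpd_apply]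
    have h2 : contractUpd (e :: rest) j = e.2.1 j + contractUpd rest j := by
      simp [contractUpd_apply]
    rw [h1, h2]
    linarith

section LoopPathFacts

variable {l0 l : L} {π : List (VEdge n L)}

lemma LoopPath.getElem_zero_fst (hπ : P.LoopPath l0 l π) (h0 : 0 < π.length) :
    (π[0]'h0).1 = l := by
  obtain ⟨-, hpath, -, -, -⟩ := hπ
  obtain ⟨e, π', rfl⟩ : ∃ e π', π = e :: π' := by
    cases π with
    | nil => simp at h0
    | cons e π' => exact ⟨e, π', rfl⟩
  exact hpath.head_src.1

/-- No edge of a loop-path except the last one returns to the header. -/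
lemma LoopPath.interior (hπ : P.LoopPath l0 l π) :
    ∀ e' ∈ π.dropLast, e'.2.2 ≠ l := by
  have hpath := hπ.2.1
  have hne := hπ.2.2.1
  have hnodup := hπ.2.2.2.1
  intro e' he' htgt
  rw [List.mem_iff_getElem] at he'
  obtain ⟨t, ht, hget⟩ := he'
  rw [List.length_dropLast] at ht
  rw [List.getElem_dropLast] at hget
  have hsucc : (π[t+1]'(by omega)).1 = l := by
    rw [hpath.src_succ t (by omega), hget, htgt]
  have h0 : (π[0]'(by omega)).1 = l := hπ.getElem_zero_fst (by omega)
  have hinj := List.nodup_iff_injective_get.mp hnodup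
  have hl : (List.map Prod.fst π).length = π.length := List.length_map _
  have e0 : (List.map Prod.fst π).get ⟨0, by omega⟩ = l := by
    simp only [List.get_eq_getElem, List.getElem_map]; exact h0
  have e1 : (List.map Prod.fst π).get ⟨t+1, by omega⟩ = l := by
    simp only [List.get_eq_getElem, List.getElem_map]; exact hsucc
  have := hinj (e0.trans e1.symm)
  simp only [Fin.mk.injEq] at this
  omega

lemma LoopPath.getLast_tgt (hπ : P.LoopPath l0 l π) (hne : π ≠ []) :
    (π.getLast hne).2.2 = l := hπ.2.1.last_tgt hne

end LoopPathFacts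

section InstanceFacts

variable {l0 l : L} {π p : List (VEdge n L)}

lemma getElem_drop_take {α : Type*} (p : List α) (i k m : ℕ)
    (hm : m < ((p.drop i).take k).length) :
    ((p.drop i).take k)[m]'hm
      = p[i+m]'(by rw [List.length_take, List.length_drop] at hm; omega) := by
  rw [List.getElem_take, List.getElem_drop]

lemma InstanceAt.len_eq {i k : ℕ} (h : P.InstanceAt π p i k) :
    ((p.drop i).take k).length = k := by
  obtain ⟨h1, h2, -⟩ := h
  rw [List.length_take, List.length_drop]
  omega

/-- The first transition of an instance occurrence is the head of `π`,
whose source is the header `l`. -/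
lemma InstanceAt.start_fst (hπ : P.LoopPath l0 l π) {i k : ℕ}
    (h : P.InstanceAt π p i k) (hi : i < p.length) : (p[i]'hi).1 = l := by
  have hlen := h.len_eq
  obtain ⟨hik, hk1, D, e, rest, heq, haux⟩ := h
  subst heq
  obtain ⟨ν', hs⟩ := haux.head
  have h0 := hπ.getElem_zero_fst (by simp)
  rw [List.getElem_cons_zero] at h0
  have hlen0 : 0 < ((p.drop i).take k).length := by rw [hlen]; omega
  have h1 : ((p.drop i).take k)[0]'hlen0 = e := by simp [hs]
  rw [getElem_drop_take] at h1
  simp only [Nat.add_zero] at h1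
  rw [h1, h0]

/-- No transition of an instance occurrence except the last one has target `l`. -/
lemma InstanceAt.interior_tgt (hπ : P.LoopPath l0 l π) {i k t : ℕ}
    (h : P.InstanceAt π p i k) (h1 : i ≤ t) (h2 : t + 1 < i + k) (ht : t < p.length) :
    (p[t]'ht).2.2 ≠ l := by
  have hlen := h.len_eq
  obtain ⟨hik, hk1, D, e, rest, heq, haux⟩ := h
  subst heq
  have hel : e.1 = l := by
    have h0 := hπ.getElem_zero_fst (by simp)
    rw [List.getElem_cons_zero] at h0
    exact h0
  have hint := haux.interior (by rw [hel]; exact hπ.interior)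
  have hmem : p[t]'ht ∈ ((p.drop i).take k).dropLast := by
    rw [List.mem_iff_getElem]
    refine ⟨t - i, by rw [List.length_dropLast, hlen]; omega, ?_⟩
    rw [List.getElem_dropLast, getElem_drop_take]
    congr 1
    omega
  intro htl
  exact hint _ hmem (by rw [hel]; exact htl)

/-- The last transition of an instance occurrence has target `l`. -/
lemma InstanceAt.last_tgt (hπ : P.LoopPath l0 l π) {i k : ℕ}
    (h : P.InstanceAt π p i k) (ht : i + k - 1 < p.length) :
    (p[i+k-1]'ht).2.2 = l := by
  have hlen := h.len_eq
  obtain ⟨hik, hk1, D, e, rest, heq, haux⟩ := h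
  subst heq
  have hsne : (p.drop i).take k ≠ [] := by
    intro hc; rw [hc] at hlen; simp at hlen; omega
  have hπne : (e :: rest) ≠ [] := by simp
  have hg : ((p.drop i).take k).getLast hsne = (e :: rest).getLast hπne := by
    rw [List.getLast_eq_iff_getLast?_eq_some, haux.getLast?, List.getLast?_eq_getLast hπne]
  have h2 : ((p.drop i).take k).getLast hsne
      = ((p.drop i).take k)[k-1]'(by rw [hlen]; omega) := by
    rw [List.getLast_eq_getElem]
    congr 1
    rw [hlen]
  rw [getElem_drop_take] at h2
  have h4 : (p[i+(k-1)]'(by omega)) = (p[i+k-1]'ht) := by congr 1; omega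
  rw [← h4, ← h2, hg]
  exact hπ.getLast_tgt hπne

lemma InstanceAt.unique (hπ : P.LoopPath l0 l π) {i k1 k2 : ℕ}
    (h1 : P.InstanceAt π p i k1) (h2 : P.InstanceAt π p i k2) : k1 = k2 := by
  by_contra hne
  wlog hlt : k1 < k2 generalizing k1 k2
  · exact this h2 h1 (Ne.symm hne) (by omega)
  have hlast := h1.last_tgt hπ (by obtain ⟨a,b,-⟩ := h1; omega)
  have hint := h2.interior_tgt hπ (t := i + k1 - 1)
    (by obtain ⟨a,b,-⟩ := h1; omega) (by obtain ⟨a,b,-⟩ := h1; omega)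
    (by obtain ⟨a,b,-⟩ := h1; omega)
  exact hint hlast

lemma InstanceAt.separated (hπ : P.LoopPath l0 l π) {i k i' k' : ℕ}
    (hp : ∃ a b, P.FPath a p b)
    (h1 : P.InstanceAt π p i k) (h2 : P.InstanceAt π p i' k') (hlt : i < i') :
    i + k ≤ i' := by
  by_contra hc
  push_neg at hc
  obtain ⟨a, b, hpab⟩ := hp
  have hi' : i' < p.length := by obtain ⟨x, y, -⟩ := h2; omega
  have hstart := h2.start_fst hπ hi'
  have hsrc : (p[i'-1+1]'(by omega)).1 = (p[i'-1]'(by omega)).2.2 :=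
    hpab.src_succ (i'-1) (by omega)
  have h4 : (p[i'-1+1]'(by omega)) = (p[i']'hi') := by congr 1; omega
  rw [h4] at hsrc
  have hint := h1.interior_tgt hπ (t := i' - 1) (by omega) (by omega) (by omega)
  rw [← hsrc, hstart] at hint
  exact hint rfl

lemma instSet_finite (π p : List (VEdge n L)) :
    {q : ℕ × ℕ | P.InstanceAt π p q.1 q.2}.Finite := by
  apply Set.Finite.subset ((Set.finite_Iic p.length).prod (Set.finite_Iic p.length))
  rintro ⟨i, kk⟩ ⟨h1, h2, -⟩
  constructor <;> simp only [Set.mem_Iic] <;> omega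

/-- Key counting bound: along any cycle, the contracted update of `x_j` is at most
`-k` times the number of instances of `π`. -/
lemma count_bound {j : Fin n} {k : ℤ} (hk : 0 < k)
    (hred : P.Reducible l0) (hπ : P.LoopPath l0 l π)
    (hdec : contractUpd π j = -k)
    (hmono : ∀ (π' : List (VEdge n L)) (l' : L), P.LoopPath l0 l' π' →
      contractUpd π' j ≤ 0) :
    ∀ (N : ℕ) (p : List (VEdge n L)) (b : L), p.length ≤ N → P.FPath b p b →
      contractUpd p j ≤ -k * P.numInstances π p := by
  have hcyc : ∀ (q : List (VEdge n L)) (a : L), P.FPath a q a → contractUpd q j ≤ 0 :=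
    fun q a hq => cycle_nonpos hred hmono q.length q a le_rfl hq
  intro N
  induction N with
  | zero =>
    intro p b hlen hp
    rw [Nat.le_zero, List.length_eq_zero_iff] at hlen
    subst hlen
    have hz : P.numInstances π ([] : List (VEdge n L)) = 0 := by
      unfold numInstances
      convert Set.ncard_empty (ℕ × ℕ)
      ext ⟨i, kk⟩
      simp only [Set.mem_setOf_eq, Set.mem_empty_iff_false, iff_false]
      rintro ⟨h1, h2, -⟩
      simp at h1
      omega
    rw [hz]
    simp [contractUpd]
  | succ N ih =>
    intro p b hlen hp
    set S := {q : ℕ × ℕ | P.InstanceAt π p q.1 q.2} with hSdef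
    have hnum : P.numInstances π p = S.ncard := rfl
    by_cases hS : S = ∅
    · rw [hnum, hS]
      simpa using hcyc p b hp
    · have hSne : S.Nonempty := Set.nonempty_iff_ne_empty.mpr hS
      obtain ⟨⟨i1, k1⟩, hq1⟩ := hSne
      have hTne : {i : ℕ | ∃ kk, (i, kk) ∈ S}.Nonempty := ⟨i1, k1, hq1⟩
      set i0 := sInf {i : ℕ | ∃ kk, (i, kk) ∈ S} with hi0def
      obtain ⟨k0, hk0⟩ : i0 ∈ {i : ℕ | ∃ kk, (i, kk) ∈ S} := Nat.sInf_mem hTne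
      have hmin : ∀ q ∈ S, i0 ≤ q.1 := fun q hq => Nat.sInf_le ⟨q.2, by simpa using hq⟩
      have hIA : P.InstanceAt π p i0 k0 := hk0
      have hik : i0 + k0 ≤ p.length := hIA.1
      have hk01 : 1 ≤ k0 := hIA.2.1
      have hi0lt : i0 < p.length := by omega
      have hstart : (p[i0]'hi0lt).1 = l := hIA.start_fst hπ hi0lt
      obtain ⟨c1, hA, hdrop⟩ := FPath.split (p := p.take i0) (q := p.drop i0)
        (by rw [List.take_append_drop]; exact hp)
      have hc1 : c1 = l := by
        rw [List.drop_eq_getElem_cons hi0lt] at hdrop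
        exact hdrop.head_src.1.symm.trans hstart
      rw [hc1] at hA hdrop
      have hsplit2 : p.drop i0 = (p.drop i0).take k0 ++ p.drop (i0 + k0) := by
        have hdd : (p.drop i0).drop k0 = p.drop (i0 + k0) := by
          rw [List.drop_drop]
        conv_lhs => rw [← List.take_append_drop k0 (p.drop i0), hdd]
      rw [hsplit2] at hdrop
      obtain ⟨c2, hs, hB⟩ := FPath.split hdrop
      have hslen : ((p.drop i0).take k0).length = k0 := hIA.len_eq
      have hsne : (p.drop i0).take k0 ≠ [] := by
        intro hc; rw [hc] at hslen; simp at hslen; omega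
      have hc2 : c2 = l := by
        have hlt := hs.last_tgt hsne
        have e1 : ((p.drop i0).take k0).getLast hsne
            = ((p.drop i0).take k0)[k0-1]'(by rw [hslen]; omega) := by
          rw [List.getLast_eq_getElem]
          congr 1
          rw [hslen]
        rw [getElem_drop_take] at e1
        have e2 : (p[i0+(k0-1)]'(by omega)) = (p[i0+k0-1]'(by omega)) := by congr 1; omega
        rw [e2] at e1
        rw [e1] at hlt
        exact hlt.symm.trans (hIA.last_tgt hπ (by omega))
      rw [hc2] at hB
      have hBA : P.FPath l (p.drop (i0+k0) ++ p.take i0) l := hB.append hA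
      have hlenBA : (p.drop (i0+k0) ++ p.take i0).length ≤ N := by
        rw [List.length_append, List.length_drop, List.length_take]
        omega
      have hIH := ih (p.drop (i0+k0) ++ p.take i0) l hlenBA hBA
      have hsum : contractUpd p j = contractUpd ((p.drop i0).take k0) j
          + contractUpd (p.drop (i0+k0) ++ p.take i0) j := by
        have hq1' : contractUpd p j
            = contractUpd (p.take i0) j + contractUpd (p.drop i0) j := by
          conv_lhs => rw [← List.take_append_drop i0 p]
          rw [contractUpd_append]
        have hq2' : contractUpd (p.drop i0) j
            = contractUpd ((p.drop i0).take k0) j + contractUpd (p.drop (i0+k0)) j := by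
          conv_lhs => rw [hsplit2]
          rw [contractUpd_append]
        rw [contractUpd_append, hq1', hq2']
        ring
      obtain ⟨-, -, D0, e, rest, heq, haux⟩ := hIA
      have hsle : contractUpd ((p.drop i0).take k0) j ≤ -k := by
        have hle := haux.sum_le hcyc
        rw [hdec] at hle
        exact hle
      -- counting
      have hIA : P.InstanceAt π p i0 k0 := hk0
      have hfinS : S.Finite := instSet_finite π p
      have hfinBA := instSet_finite (P := P) π (p.drop (i0+k0) ++ p.take i0)
      have hge : ∀ q ∈ S \ {((i0, k0) : ℕ × ℕ)}, i0 + k0 ≤ q.1 := by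
        rintro ⟨i, kk⟩ ⟨hqS, hqne⟩
        have hi0le : i0 ≤ i := hmin _ hqS
        rcases eq_or_lt_of_le hi0le with rfl | hlt'
        · exfalso
          apply hqne
          have hqS' : P.InstanceAt π p i0 kk := hqS
          have hkkeq : kk = k0 := InstanceAt.unique hπ hqS' hIA
          rw [Set.mem_singleton_iff, hkkeq]
        · have hqS' : P.InstanceAt π p i kk := hqS
          exact hIA.separated hπ ⟨b, b, hp⟩ hqS' hlt'
      have hcount : S.ncard
          ≤ {q : ℕ × ℕ | P.InstanceAt π (p.drop (i0+k0) ++ p.take i0) q.1 q.2}.ncard + 1 := by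
        rw [← Set.ncard_diff_singleton_add_one (show ((i0, k0) : ℕ × ℕ) ∈ S from hk0) hfinS]
        apply Nat.add_le_add_right
        refine Set.ncard_le_ncard_of_injOn (fun q => (q.1 - (i0 + k0), q.2)) ?_ ?_ hfinBA
        · rintro ⟨i, kk⟩ hq
          have hgeq : i0 + k0 ≤ i := hge _ hq
          obtain ⟨hqS, -⟩ := hq
          have hqS' : P.InstanceAt π p i kk := hqS
          obtain ⟨hik', hkk1, D', hins'⟩ := hqS'
          show P.InstanceAt π (p.drop (i0+k0) ++ p.take i0) (i - (i0+k0)) kk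
          refine ⟨?_, hkk1, D', ?_⟩
          · rw [List.length_append, List.length_drop, List.length_take]
            omega
          · have hlist : (((p.drop (i0+k0) ++ p.take i0)).drop (i - (i0+k0))).take kk
                = (p.drop i).take kk := by
              rw [List.drop_append_of_le_length (by rw [List.length_drop]; omega)]
              rw [List.take_append_of_le_length
                (by rw [List.length_drop, List.length_drop]; omega)]
              rw [List.drop_drop]
              congr 2
              omega
            rw [hlist]
            exact hins'
        · rintro ⟨i, kk⟩ hq ⟨i', kk'⟩ hq' heq2
          have hg1 : i0 + k0 ≤ i := hge _ hq
          have hg2 : i0 + k0 ≤ i' := hge _ hq'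
          have heq3 : (i - (i0 + k0), kk) = (i' - (i0 + k0), kk') := heq2
          rw [Prod.mk.injEq] at heq3
          have : i = i' := by omega
          rw [Prod.mk.injEq]
          exact ⟨this, heq3.2⟩
      rw [hnum, hsum]
      have hNp : (S.ncard : ℤ)
          ≤ (P.numInstances π (p.drop (i0+k0) ++ p.take i0) : ℤ) + 1 := by
        exact_mod_cast hcount
      nlinarith [hIH, hsle, hNp, hk,
        mul_nonneg (le_of_lt hk)
          (sub_nonneg.mpr (by linarith :
            (S.ncard : ℤ) ≤ (P.numInstances π (p.drop (i0+k0) ++ p.take i0) : ℤ) + 1))]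

end InstanceFacts

end VASS

/-- Let `P` be a reducible VASS whose control flow graph is a single SCC
with unique entry (and exit) location `l0`.  Let `π` be a loop-path whose contracted update
decreases variable `x_j` by `k > 0` while no loop-path of `P` increases `x_j`.  Then every
finite trace of `P` from `(l0, σ0)` back to `l0` contains at most `σ0(x_j)/k` instances
of `π`. -/
theorem base_case_path_bound
    {n : ℕ} {L : Type*} [Finite L] (P : VASS n L) (l0 : L)
    (hEfin : P.E.Finite)
    (hreach : ∀ x, ∃ p, P.FPath l0 p x)
    (hcoreach : ∀ x, ∃ p, P.FPath x p l0)
    (hred : P.Reducible l0)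
    (π : List (VEdge n L)) (l : L) (hπ : P.LoopPath l0 l π)
    (j : Fin n) (k : ℤ) (hk : 0 < k)
    (hdec : VASS.contractUpd π j = -k)
    (hmono : ∀ (π' : List (VEdge n L)) (l' : L), P.LoopPath l0 l' π' →
      VASS.contractUpd π' j ≤ 0)
    (σ0 : Valu n) (vals : ℕ → Valu n) (hv0 : vals 0 = σ0)
    (p : List (VEdge n L)) (hp : P.FPath l0 p l0)
    (htr : P.FinTraceVals p vals) :
    (P.numInstances π p : ℚ) ≤ (σ0 j : ℚ) / (k : ℚ) := by
  classical
  have hbound := VASS.count_bound hk hred hπ hdec hmono p.length p l0 le_rfl hp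
  have hvals : ∀ m, m ≤ p.length →
      (vals m j : ℤ) ≤ (vals 0 j : ℤ) + VASS.contractUpd (p.take m) j := by
    intro m
    induction m with
    | zero => intro _; simp [VASS.contractUpd]
    | succ m ih =>
      intro hm
      have hmlt : m < p.length := by omega
      have h1 := ih (by omega)
      have h2 := htr m hmlt j
      have h3 : p.take (m+1) = p.take m ++ [p[m]'hmlt] := by
        rw [List.take_succ]
        congr
        rw [List.getElem?_eq_getElem hmlt]
        rfl
      rw [h3, VASS.contractUpd_append]
      have h4 : VASS.contractUpd [p[m]'hmlt] j = (p[m]'hmlt).2.1 j := by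
        simp [VASS.contractUpd_apply]
      have h5 : (p.get ⟨m, hmlt⟩) = p[m]'hmlt := rfl
      rw [h5] at h2
      rw [h4]
      linarith
  have hfin := hvals p.length le_rfl
  rw [List.take_length] at hfin
  have hnn : (0 : ℤ) ≤ (vals p.length j : ℤ) := Int.ofNat_nonneg _
  rw [hv0] at hfin
  have hkey : (P.numInstances π p : ℤ) * k ≤ (σ0 j : ℤ) := by linarith
  rw [le_div_iff₀ (by exact_mod_cast hk)]
  exact_mod_cast hkey
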